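/- Let p be a monotone hazard rate distribution on [n]. Let I = [a,b] ⊂ [n] be an interval and R = [b+1,n], with η = p(I)/p(R) (assuming p(R) > 0). Then p(b+1) ≥ p(a)/(1+η). -/
import Mathlib


open Finset

/-- Lemma 5.1 of Chan–Diakonikolas–Servedio–Sun: an MHR distribution is almost
non-decreasing.  If `I = [a,b] ⊂ [n]`, `R = [b+1,n]`, and `η = p(I)/p(R)`, then
`p(b+1) ≥ p(a)/(1+η)`. -/
theorem mhr_almost_nondecreasing (n a b : ℕ) (p : ℕ → ℝ)
    (ha : 1 ≤ a) (hab : a ≤ b) (hbn : b + 1 ≤ n)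
    (hp0 : ∀ i, 0 ≤ p i) (hp1 : ∑ i ∈ Finset.Icc 1 n, p i = 1)
    (hmhr : ∀ i j, 1 ≤ i → i < j → j ≤ n →
      0 < 1 - ∑ k ∈ Finset.Icc 1 i, p k → 0 < 1 - ∑ k ∈ Finset.Icc 1 j, p k →
      p i / (1 - ∑ k ∈ Finset.Icc 1 i, p k) ≤ p j / (1 - ∑ k ∈ Finset.Icc 1 j, p k))
    (hR : 0 < ∑ i ∈ Finset.Icc (b + 1) n, p i) :
    p a / (1 + (∑ i ∈ Finset.Icc a b, p i) / (∑ i ∈ Finset.Icc (b + 1) n, p i)) ≤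
      p (b + 1) := by
  set R : ℝ := ∑ i ∈ Finset.Icc (b + 1) n, p i with hRdef
  set A : ℝ := ∑ i ∈ Finset.Icc a b, p i with hAdef
  -- rewrite all Icc with successor left endpoint as Ioc
  have hIoc : ∀ m k : ℕ, ∑ i ∈ Finset.Icc (m + 1) k, p i = ∑ i ∈ Finset.Ioc m k, p i := by
    intro m k; rw [Finset.Icc_add_one_left_eq_Ioc]
  -- p a ≤ A
  have hpaA : p a ≤ A :=
    Finset.single_le_sum (fun i _ => hp0 i) (Finset.mem_Icc.mpr ⟨le_refl a, hab⟩)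
  have hA0 : 0 ≤ A := le_trans (hp0 a) hpaA
  -- split: 1 = (∑ Icc 1 a) + (∑ Ioc a n)
  have hsplit1 : ∑ k ∈ Finset.Icc 1 a, p k + ∑ k ∈ Finset.Ioc a n, p k = 1 := by
    rw [← hp1]
    have h1 : (Finset.Icc 1 n : Finset ℕ) = Finset.Ioc 0 n := (Finset.Icc_add_one_left_eq_Ioc 0 n).symm
    have h2 : (Finset.Icc 1 a : Finset ℕ) = Finset.Ioc 0 a := (Finset.Icc_add_one_left_eq_Ioc 0 a).symm
    rw [h1, h2, Finset.sum_Ioc_consecutive _ (Nat.zero_le a) (le_trans hab (by omega))]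
  have hsplit2 : ∑ k ∈ Finset.Icc 1 (b+1), p k + ∑ k ∈ Finset.Ioc (b+1) n, p k = 1 := by
    rw [← hp1]
    have h1 : (Finset.Icc 1 n : Finset ℕ) = Finset.Ioc 0 n := (Finset.Icc_add_one_left_eq_Ioc 0 n).symm
    have h2 : (Finset.Icc 1 (b+1) : Finset ℕ) = Finset.Ioc 0 (b+1) := (Finset.Icc_add_one_left_eq_Ioc 0 (b+1)).symm
    rw [h1, h2, Finset.sum_Ioc_consecutive _ (Nat.zero_le (b+1)) hbn]
  -- ∑ Ioc a n = (A - p a) + R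
  have hIan : ∑ k ∈ Finset.Ioc a n, p k = (A - p a) + R := by
    have hs : ∑ k ∈ Finset.Ioc a b, p k + ∑ k ∈ Finset.Ioc b n, p k
        = ∑ k ∈ Finset.Ioc a n, p k :=
      Finset.sum_Ioc_consecutive _ hab (by omega)
    have hAb : A = p a + ∑ k ∈ Finset.Ioc a b, p k := by
      have h1 : ∑ k ∈ Finset.Ioc (a-1) a, p k + ∑ k ∈ Finset.Ioc a b, p k
          = ∑ k ∈ Finset.Ioc (a-1) b, p k :=
        Finset.sum_Ioc_consecutive _ (by omega) hab
      have h2 : (Finset.Icc a b : Finset ℕ) = Finset.Ioc (a-1) b := by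
        rw [← Finset.Icc_add_one_left_eq_Ioc]; congr 1; omega
      have h3 : (Finset.Ioc (a-1) a : Finset ℕ) = {a} := by
        ext x; simp only [Finset.mem_Ioc, Finset.mem_singleton]; omega
      rw [hAdef, h2, ← h1, h3, Finset.sum_singleton]
    have hRb : R = ∑ k ∈ Finset.Ioc b n, p k := by rw [hRdef, Finset.Icc_add_one_left_eq_Ioc]
    rw [← hs, ← hRb, hAb]; ring
  -- R = p (b+1) + ∑ Ioc (b+1) n
  have hRsplit : R = p (b+1) + ∑ k ∈ Finset.Ioc (b+1) n, p k := by
    have hs : ∑ k ∈ Finset.Ioc b (b+1), p k + ∑ k ∈ Finset.Ioc (b+1) n, p k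
        = ∑ k ∈ Finset.Ioc b n, p k :=
      Finset.sum_Ioc_consecutive _ (Nat.le_succ b) hbn
    rw [hRdef, Finset.Icc_add_one_left_eq_Ioc, ← hs, Nat.Ioc_succ_singleton, Finset.sum_singleton]
  have hTa : 1 - ∑ k ∈ Finset.Icc 1 a, p k = (A - p a) + R := by
    rw [← hIan]; linarith [hsplit1]
  have hTb1 : 1 - ∑ k ∈ Finset.Icc 1 (b+1), p k = R - p (b+1) := by
    have : ∑ k ∈ Finset.Ioc (b+1) n, p k = R - p (b+1) := by linarith [hRsplit]
    rw [← this]; linarith [hsplit2]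
  have h1η : 0 < 1 + A / R := by positivity
  rw [div_le_iff₀ h1η]
  have hgoal : p a * R ≤ p (b+1) * (R + A) → p a ≤ p (b+1) * (1 + A / R) := by
    intro h
    have : p (b+1) * (1 + A / R) = p (b+1) * (R + A) / R := by field_simp
    rw [this, le_div_iff₀ hR]
    linarith
  apply hgoal
  by_cases hT : 0 < R - p (b+1)
  · -- use the MHR hypothesis
    have hTa0 : 0 < (A - p a) + R := by
      have : 0 ≤ A - p a := by linarith
      have : 0 ≤ p (b+1) := hp0 (b+1)
      linarith
    have key := hmhr a (b+1) ha (by omega) hbn (by rw [hTa]; exact hTa0)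
      (by rw [hTb1]; exact hT)
    rw [hTa, hTb1, div_le_div_iff₀ hTa0 hT] at key
    nlinarith [hp0 a, hp0 (b+1)]
  · -- p(b+1) = R
    have h1 : 0 ≤ R - p (b+1) := by
      have := Finset.sum_nonneg (fun i (_ : i ∈ Finset.Ioc (b+1) n) => hp0 i)
      linarith [hRsplit]
    have h2 : p (b+1) = R := by push_neg at hT; linarith
    nlinarith [hp0 a]
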